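/- Let C > 0, let L ⊆ ℝⁿ × ℝⁿ and h : ℝⁿ × ℝⁿ → ℝ, and let L_k ⊆ ℝⁿ × ℝⁿ be a sequence of sets with functions h_k : ℝⁿ × ℝⁿ → ℝ. Let f_k : ℝⁿ → ℝ be a sequence of C-Lipschitz functions converging uniformly to f : ℝⁿ → ℝ, and let V ⊆ ℝⁿ be a set with Lebesgue-null complement such that for every k and every q ∈ V: f_k is differentiable at q, (q, ∇f_k(q)) ∈ L_k, and f_k(q) = h_k(q, ∇f_k(q)). Assume the following closure property: whenever (k_j) is a strictly increasing sequence of indices and x_j ∈ L_{k_j} is a sequence converging to a point x ∈ ℝⁿ × ℝⁿ, then x ∈ L and h_{k_j}(x_j) → h(x). For q ∈ ℝⁿ write L_q := {p ∈ ℝⁿ : (q,p) ∈ L}. Then f is C-Lipschitz and: (a) at every point q where f is differentiable, ∇f(q) lies in the convex hull of L_q; (b) if moreover ∇f(q) is an extreme point of the convex hull of L_q, then f(q) = h(q, ∇f(q)). -/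

import Mathlib

open scoped NNReal ENNReal
open MeasureTheory Filter Set Topology

lemma aux_sum_extend {α β : Type*} {M : Type*} [AddCommMonoid M] [Fintype α] [Fintype β]
    (e : α ↪ β) (φ : β → M) (hφ : ∀ i, (¬ ∃ a, e a = i) → φ i = 0) :
    ∑ i, φ i = ∑ a, φ (e a) := by
  classical
  rw [← Finset.sum_map Finset.univ e φ]
  symm
  apply Finset.sum_subset (Finset.subset_univ _)
  intro i _ hi
  apply hφ
  rintro ⟨a, rfl⟩
  exact hi (Finset.mem_map.2 ⟨a, Finset.mem_univ _, rfl⟩)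

lemma aux_isCompact_convexHull {E' : Type*} [NormedAddCommGroup E'] [NormedSpace ℝ E']
    [FiniteDimensional ℝ E'] {K : Set E'} (hK : IsCompact K) :
    IsCompact (convexHull ℝ K) := by
  classical
  rcases K.eq_empty_or_nonempty with rfl | ⟨y₀, hy₀⟩
  · simp [convexHull_empty]
  set N := Module.finrank ℝ E' + 1 with hN
  set g : (Fin N → ℝ) × (Fin N → E') → E' := fun wz => ∑ i, wz.1 i • wz.2 i with hg
  have hgc : Continuous g := by
    apply continuous_finset_sum
    intro i _
    exact ((continuous_apply i).comp continuous_fst).smul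
      ((continuous_apply i).comp continuous_snd)
  set D : Set ((Fin N → ℝ) × (Fin N → E')) := stdSimplex ℝ (Fin N) ×ˢ Set.univ.pi (fun _ => K)
    with hD
  have hDc : IsCompact D := (isCompact_stdSimplex (𝕜 := ℝ) (ι := Fin N)).prod (isCompact_univ_pi fun _ => hK)
  have himg : convexHull ℝ K = g '' D := by
    apply Subset.antisymm
    · intro x hx
      rw [convexHull_eq_union] at hx
      simp only [Set.mem_iUnion] at hx
      obtain ⟨t, hts, hai, hxt⟩ := hx
      have hcard : t.card ≤ N := by
        have h1 := hai.card_le_finrank_succ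
        rw [Fintype.card_coe] at h1
        have h2 : Module.finrank ℝ ↥(vectorSpan ℝ (Set.range (Subtype.val : ↥t → E')))
            ≤ Module.finrank ℝ E' := Submodule.finrank_le _
        omega
      rw [Finset.convexHull_eq] at hxt
      obtain ⟨w, hw0, hw1, hwx⟩ := hxt
      have hcard' : Fintype.card ↥t ≤ Fintype.card (Fin N) := by
        simpa [Fintype.card_coe] using hcard
      obtain ⟨e⟩ := Function.Embedding.nonempty_iff_card_le.2 hcard'
      set W : Fin N → ℝ := Function.extend e (fun a => w ↑a) (fun _ => 0) with hW
      set Z : Fin N → E' := Function.extend e (fun a => (↑a : E')) (fun _ => y₀) with hZ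
      have hWe : ∀ a : ↥t, W (e a) = w ↑a := fun a => e.injective.extend_apply _ _ a
      have hZe : ∀ a : ↥t, Z (e a) = ↑a := fun a => e.injective.extend_apply _ _ a
      have hWn : ∀ i, (¬ ∃ a : ↥t, e a = i) → W i = 0 := fun i hi =>
        Function.extend_apply' _ _ _ hi
      have hZn : ∀ i, (¬ ∃ a : ↥t, e a = i) → Z i = y₀ := fun i hi =>
        Function.extend_apply' _ _ _ hi
      refine ⟨(W, Z), ⟨⟨?_, ?_⟩, ?_⟩, ?_⟩
      · intro i
        show 0 ≤ W i
        rcases em (∃ a : ↥t, e a = i) with ⟨a, rfl⟩ | h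
        · rw [hWe a]; exact hw0 _ a.2
        · rw [hWn i h]
      · show ∑ i, W i = 1
        rw [aux_sum_extend e W hWn, Finset.sum_congr rfl fun a _ => hWe a,
          ← Finset.sum_attach t (fun y => w y)] at *
        exact hw1
      · intro i _
        show Z i ∈ K
        rcases em (∃ a : ↥t, e a = i) with ⟨a, rfl⟩ | h
        · rw [hZe a]; exact hts a.2
        · rw [hZn i h]; exact hy₀
      · show ∑ i, W i • Z i = x
        have : ∀ i, (¬ ∃ a : ↥t, e a = i) → W i • Z i = 0 := fun i hi => by
          rw [hWn i hi, zero_smul]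
        have hs2 : (∑ i, W i • Z i) = ∑ a : ↥t, W (e a) • Z (e a) := aux_sum_extend e _ this
        rw [hs2, Finset.sum_congr rfl fun a _ => by rw [hWe a, hZe a]]
        rw [← hwx, Finset.centerMass_eq_of_sum_1 _ _ hw1,
          ← Finset.sum_attach t (fun y => w y • id y)]
        rfl
    · rintro x ⟨⟨W, Z⟩, ⟨⟨hW0, hW1⟩, hZ⟩, rfl⟩
      exact mem_convexHull_of_exists_fintype W Z hW0 hW1
        (fun i => hZ i (Set.mem_univ i)) rfl
  rw [himg]
  exact hDc.image hgc

lemma aux_lip_deriv_bound {Λ : ℝ≥0} {g : ℝ → ℝ} (hg : LipschitzWith Λ g) {c t : ℝ}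
    (ht : 0 ≤ t)
    (hae : ∀ᵐ s ∂(volume.restrict (Set.Ioc 0 t)),
      DifferentiableAt ℝ g s ∧ deriv g s ≤ c) :
    g t - g 0 ≤ c * t := by
  have hgsub : ∀ a b : ℝ, g b - g a ≤ Λ * |b - a| := by
    intro a b
    have := hg.dist_le_mul b a
    rw [Real.dist_eq, Real.dist_eq] at this
    calc g b - g a ≤ |g b - g a| := le_abs_self _
      _ ≤ Λ * |b - a| := this
  rcases eq_or_lt_of_le ht with rfl | ht0
  · simp
  by_cases hcΛ : (Λ : ℝ) ≤ c
  · have := hgsub 0 t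
    rw [sub_zero, abs_of_pos ht0] at this
    nlinarith
  push_neg at hcΛ
  set d : ℝ := (Λ : ℝ) - c with hd
  have hd0 : 0 < d := by simp [hd]; linarith
  set h : ℝ → ℝ := fun s => (Λ : ℝ) * s - g s with hh
  have hmono : Monotone h := by
    intro a b hab
    have := hgsub a b
    rw [abs_of_nonneg (by linarith)] at this
    simp only [hh]
    nlinarith
  have hgc : Continuous g := hg.continuous
  have hcont : Continuous h := (continuous_const.mul continuous_id).sub hgc
  set δ : ℕ → ℝ := fun m => 1 / (m + 1) with hδ
  have hδ0 : ∀ m, 0 < δ m := fun m => by positivity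
  set φ : ℕ → ℝ → ℝ := fun m s => (h (s + δ m) - h s) / δ m with hφ
  have hφcont : ∀ m, Continuous (φ m) :=
    fun m => ((hcont.comp (continuous_id.add continuous_const)).sub hcont).div_const _
  have hφnn : ∀ m s, 0 ≤ φ m s := by
    intro m s
    apply div_nonneg _ (hδ0 m).le
    have := hmono (le_add_of_nonneg_right (hδ0 m).le : s ≤ s + δ m)
    linarith
  have key : ENNReal.ofReal d * ENNReal.ofReal t ≤ ENNReal.ofReal (h t - h 0) := by
    have fatou := lintegral_liminf_le (μ := volume.restrict (Set.Ioc 0 t))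
        (f := fun m s => ENNReal.ofReal (φ m s)) (u := atTop) (fun m => ENNReal.measurable_ofReal.comp (hφcont m).measurable)
    have hlow : ENNReal.ofReal d * ENNReal.ofReal t ≤
        ∫⁻ s in Set.Ioc 0 t, Filter.liminf (fun m => ENNReal.ofReal (φ m s)) atTop := by
      have hsae : ∀ᵐ s ∂(volume.restrict (Set.Ioc 0 t)),
          ENNReal.ofReal d ≤ Filter.liminf (fun m => ENNReal.ofReal (φ m s)) atTop := by
        filter_upwards [hae] with s hs
        have hder : HasDerivAt h ((Λ : ℝ) - deriv g s) s := by
          have := (((hasDerivAt_id s).const_mul (Λ : ℝ)).sub hs.1.hasDerivAt); rw [mul_one] at this; exact this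
        have hslope := hasDerivAt_iff_tendsto_slope.1 hder
        have hseq : Tendsto (fun m : ℕ => s + δ m) atTop (𝓝[≠] s) := by
          apply tendsto_nhdsWithin_of_tendsto_nhds_of_eventually_within
          · have : Tendsto (fun m : ℕ => δ m) atTop (𝓝 0) := by
              exact tendsto_one_div_add_atTop_nhds_zero_nat
            simpa using (tendsto_const_nhds.add this)
          · exact Eventually.of_forall fun m => by
              simp only [Set.mem_compl_iff, Set.mem_singleton_iff]
              have := hδ0 m; intro hcon; nlinarith [hδ0 m]
        have hq : Tendsto (fun m : ℕ => φ m s) atTop (𝓝 ((Λ : ℝ) - deriv g s)) := by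
          have := hslope.comp hseq
          convert this using 2 with m
          simp only [Function.comp_apply, slope_def_field, hφ]
          rw [div_eq_div_iff (hδ0 m).ne' (by simp [hδ]; positivity)]
          ring_nf
        have hq' : Tendsto (fun m : ℕ => ENNReal.ofReal (φ m s)) atTop
            (𝓝 (ENNReal.ofReal ((Λ : ℝ) - deriv g s))) :=
          (ENNReal.continuous_ofReal.tendsto _).comp hq
        rw [hq'.liminf_eq]
        exact ENNReal.ofReal_le_ofReal (by simp [hd]; linarith [hs.2])
      calc ENNReal.ofReal d * ENNReal.ofReal t
          = ∫⁻ _ in Set.Ioc 0 t, ENNReal.ofReal d := by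
            rw [setLIntegral_const, Real.volume_Ioc, sub_zero]
        _ ≤ _ := lintegral_mono_ae hsae
    have hbound : ∀ m : ℕ, (∫⁻ s in Set.Ioc 0 t, ENNReal.ofReal (φ m s)) ≤
        ENNReal.ofReal ((h t - h 0) + 2 * Λ * δ m) := by
      intro m
      have hint : IntegrableOn (φ m) (Set.Ioc 0 t) := (hφcont m).integrableOn_Ioc
      rw [← ofReal_integral_eq_lintegral_ofReal hint
        (Eventually.of_forall fun s => hφnn m s)]
      apply ENNReal.ofReal_le_ofReal
      have hii : ∀ a b : ℝ, IntervalIntegrable h volume a b :=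
        fun a b => hcont.intervalIntegrable a b
      have hii' : ∀ a b : ℝ, IntervalIntegrable (fun s => h (s + δ m)) volume a b :=
        fun a b => (hcont.comp (continuous_id.add continuous_const)).intervalIntegrable a b
      have e0 : ∫ s in Set.Ioc 0 t, φ m s = ∫ s in (0:ℝ)..t, φ m s :=
        (intervalIntegral.integral_of_le ht).symm
      have e1 : ∫ s in (0:ℝ)..t, φ m s
          = ((∫ s in (0:ℝ)..t, h (s + δ m)) - ∫ s in (0:ℝ)..t, h s) / δ m := by
        rw [← intervalIntegral.integral_sub (hii' 0 t) (hii 0 t)]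
        simp only [hφ]
        rw [intervalIntegral.integral_div]
      have e2 : ∫ s in (0:ℝ)..t, h (s + δ m) = ∫ s in (δ m)..(t + δ m), h s := by
        simpa using intervalIntegral.integral_comp_add_right (a := (0:ℝ)) (b := t) h (δ m)
      have e3 : (∫ s in (0:ℝ)..(δ m), h s) + ∫ s in (δ m)..(t + δ m), h s
          = ∫ s in (0:ℝ)..(t + δ m), h s :=
        intervalIntegral.integral_add_adjacent_intervals (hii 0 (δ m)) (hii (δ m) (t + δ m))
      have e4 : (∫ s in (0:ℝ)..t, h s) + ∫ s in t..(t + δ m), h s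
          = ∫ s in (0:ℝ)..(t + δ m), h s :=
        intervalIntegral.integral_add_adjacent_intervals (hii 0 t) (hii t (t + δ m))
      have b1 : ∫ s in t..(t + δ m), h s ≤ δ m * h (t + δ m) := by
        have := intervalIntegral.integral_mono_on (by linarith [hδ0 m] : t ≤ t + δ m)
          (hii t (t + δ m)) (intervalIntegrable_const (c := h (t + δ m)))
          (fun s hs => hmono hs.2)
        rw [intervalIntegral.integral_const, smul_eq_mul] at this
        calc ∫ s in t..(t + δ m), h s ≤ (t + δ m - t) * h (t + δ m) := this
          _ = δ m * h (t + δ m) := by ring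
      have b2 : δ m * h 0 ≤ ∫ s in (0:ℝ)..(δ m), h s := by
        have := intervalIntegral.integral_mono_on (hδ0 m).le
          (intervalIntegrable_const (c := h 0)) (hii 0 (δ m))
          (fun s hs => hmono hs.1)
        rw [intervalIntegral.integral_const, smul_eq_mul] at this
        calc δ m * h 0 = (δ m - 0) * h 0 := by ring
          _ ≤ ∫ s in (0:ℝ)..(δ m), h s := this
      have b3 : h (t + δ m) ≤ h t + 2 * Λ * δ m := by
        have := hgsub (t + δ m) t
        rw [abs_of_nonpos (by linarith [hδ0 m]), neg_sub, add_sub_cancel_left] at this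
        simp only [hh]
        nlinarith [hδ0 m]
      rw [e0, e1, e2]
      rw [div_le_iff₀ (hδ0 m)]
      have hδm : 0 < δ m := hδ0 m
      nlinarith [b1, b2, b3, e3, e4]
    have hup : Filter.liminf (fun m => ∫⁻ s in Set.Ioc 0 t, ENNReal.ofReal (φ m s)) atTop
        ≤ ENNReal.ofReal (h t - h 0) := by
      have htnd : Tendsto (fun m : ℕ => ENNReal.ofReal ((h t - h 0) + 2 * Λ * δ m)) atTop
          (𝓝 (ENNReal.ofReal (h t - h 0))) := by
        apply (ENNReal.continuous_ofReal.tendsto _).comp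
        have : Tendsto (fun m : ℕ => δ m) atTop (𝓝 0) := by
          exact tendsto_one_div_add_atTop_nhds_zero_nat
        have h2 : Tendsto (fun m : ℕ => 2 * (Λ:ℝ) * δ m) atTop (𝓝 0) := by
          simpa using this.const_mul (2 * (Λ:ℝ))
        simpa using tendsto_const_nhds.add h2
      calc Filter.liminf (fun m => ∫⁻ s in Set.Ioc 0 t, ENNReal.ofReal (φ m s)) atTop
          ≤ Filter.liminf (fun m => ENNReal.ofReal ((h t - h 0) + 2 * Λ * δ m)) atTop :=
            liminf_le_liminf (Eventually.of_forall hbound)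
        _ = ENNReal.ofReal (h t - h 0) := htnd.liminf_eq
    exact le_trans hlow (le_trans fatou hup)
  have hht : 0 ≤ h t - h 0 := by
    have := hmono ht
    linarith
  rw [← ENNReal.ofReal_mul hd0.le] at key
  have h0t : d * t ≤ h t - h 0 := (ENNReal.ofReal_le_ofReal_iff hht).1 key
  simp only [hh] at h0t
  nlinarith

variable {n : ℕ}

lemma aux_fubini (V : Set (EuclideanSpace ℝ (Fin n))) (hV : volume Vᶜ = 0)
    (v : EuclideanSpace ℝ (Fin n)) :
    ∀ᵐ x₀ ∂(volume : Measure (EuclideanSpace ℝ (Fin n))), ∀ᵐ s : ℝ ∂volume,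
      x₀ + s • v ∈ V := by
  set W := toMeasurable volume Vᶜ with hW
  have hWm : MeasurableSet W := measurableSet_toMeasurable _ _
  have hW0 : volume W = 0 := by rw [hW, measure_toMeasurable]; exact hV
  set μ : Measure (EuclideanSpace ℝ (Fin n)) := volume with hμ
  set ν : Measure ℝ := volume with hν
  set N : Set (EuclideanSpace ℝ (Fin n) × ℝ) := {z | z.1 + z.2 • v ∈ W} with hN
  have hNm : MeasurableSet N := by
    have : Continuous fun z : EuclideanSpace ℝ (Fin n) × ℝ => z.1 + z.2 • v :=
      continuous_fst.add (continuous_snd.smul continuous_const)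
    exact this.measurable hWm
  have hN0 : (μ.prod ν) N = 0 := by
    rw [Measure.prod_apply_symm hNm]
    have : ∀ s : ℝ, μ ((fun x => (x, s)) ⁻¹' N) = 0 := by
      intro s
      have : ((fun x : EuclideanSpace ℝ (Fin n) => (x, s)) ⁻¹' N)
          = (fun x => x + s • v) ⁻¹' W := rfl
      rw [this, measure_preimage_add_right]
      exact hW0
    simp only [this]
    simp
  have hae : ∀ᵐ z ∂(μ.prod ν), z.1 + z.2 • v ∉ W := by
    rw [ae_iff]
    have : {z : EuclideanSpace ℝ (Fin n) × ℝ | ¬ z.1 + z.2 • v ∉ W} = N := by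
      ext z; simp [hN]
    rw [this]
    exact hN0
  have := Measure.ae_ae_of_ae_prod hae
  filter_upwards [this] with x₀ hx₀
  filter_upwards [hx₀] with s hs
  by_contra hcon
  exact hs (subset_toMeasurable _ _ hcon)

lemma aux_gradient_norm_le {F : EuclideanSpace ℝ (Fin n) → ℝ} {C : ℝ≥0}
    (hF : LipschitzWith C F) {x : EuclideanSpace ℝ (Fin n)} :
    ‖gradient F x‖ ≤ C := by
  have : ‖gradient F x‖ = ‖fderiv ℝ F x‖ := by
    rw [gradient]
    exact LinearIsometryEquiv.norm_map _ _
  rw [this]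
  exact norm_fderiv_le_of_lipschitz ℝ hF

lemma aux_inner_gradient {F : EuclideanSpace ℝ (Fin n) → ℝ} {x w : EuclideanSpace ℝ (Fin n)} :
    inner ℝ (gradient F x) w = fderiv ℝ F x w := by
  rw [gradient]
  simp [InnerProductSpace.toDual_symm_apply]

lemma aux_hasDerivAt_line {F : EuclideanSpace ℝ (Fin n) → ℝ} {x₀ v : EuclideanSpace ℝ (Fin n)}
    {s : ℝ} (hF : DifferentiableAt ℝ F (x₀ + s • v)) :
    HasDerivAt (fun u : ℝ => F (x₀ + u • v)) (inner ℝ (gradient F (x₀ + s • v)) v : ℝ) s := by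
  have hcurve : HasDerivAt (fun u : ℝ => x₀ + u • v) v s := by
    simpa using ((hasDerivAt_id s).smul_const v).const_add x₀
  have := hF.hasFDerivAt.comp_hasDerivAt s hcurve
  rw [aux_inner_gradient]
  exact this
/-- (Analytic core of Theorem 5.2.) If `f_k` are `C`-Lipschitz graph
selectors for sets `L_k` with primitives `h_k` (on a full-measure set `V`), `f_k → f`
uniformly, and the pairs `(L_k, h_k)` converge to `(L, h)` in the sense of the stated closure
property, then `f` is a `C`-Lipschitz generalized graph selector for `L` with primitive `h`:
at every point of differentiability `∇f(q)` lies in the fiberwise convex hull of `L`, and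
`f(q) = h(q, ∇f(q))` whenever `∇f(q)` is extreme there. -/
theorem generalized_graph_selector_of_limit (n : ℕ) (C : ℝ≥0) (hC : 0 < C)
    (L : Set (EuclideanSpace ℝ (Fin n) × EuclideanSpace ℝ (Fin n)))
    (h : EuclideanSpace ℝ (Fin n) × EuclideanSpace ℝ (Fin n) → ℝ)
    (Lk : ℕ → Set (EuclideanSpace ℝ (Fin n) × EuclideanSpace ℝ (Fin n)))
    (hk : ℕ → EuclideanSpace ℝ (Fin n) × EuclideanSpace ℝ (Fin n) → ℝ)
    (fk : ℕ → EuclideanSpace ℝ (Fin n) → ℝ) (f : EuclideanSpace ℝ (Fin n) → ℝ)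
    (hLip : ∀ k, LipschitzWith C (fk k))
    (hconv : TendstoUniformly fk f atTop)
    (V : Set (EuclideanSpace ℝ (Fin n))) (hV : volume Vᶜ = 0)
    (hVk : ∀ k, ∀ q ∈ V, DifferentiableAt ℝ (fk k) q ∧
      (q, gradient (fk k) q) ∈ Lk k ∧ fk k q = hk k (q, gradient (fk k) q))
    (hclosure : ∀ κ : ℕ → ℕ, StrictMono κ →
      ∀ x : ℕ → EuclideanSpace ℝ (Fin n) × EuclideanSpace ℝ (Fin n),
        (∀ j, x j ∈ Lk (κ j)) →
        ∀ y, Tendsto x atTop (nhds y) →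
          y ∈ L ∧ Tendsto (fun j => hk (κ j) (x j)) atTop (nhds (h y))) :
    LipschitzWith C f ∧
      ∀ q, DifferentiableAt ℝ f q →
        gradient f q ∈ convexHull ℝ {p | (q, p) ∈ L} ∧
          (gradient f q ∈ Set.extremePoints ℝ (convexHull ℝ {p | (q, p) ∈ L}) →
            f q = h (q, gradient f q)) := by
  classical
  have hone : Tendsto (fun m : ℕ => 1 / ((m : ℝ) + 1)) atTop (𝓝 0) :=
    tendsto_one_div_add_atTop_nhds_zero_nat
  -- f is Lipschitz
  have hLipf : LipschitzWith C f := by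
    rw [lipschitzWith_iff_dist_le_mul]
    intro x y
    have hdist : Tendsto (fun k => dist (fk k x) (fk k y)) atTop
        (𝓝 (dist (f x) (f y))) := (hconv.tendsto_at x).dist (hconv.tendsto_at y)
    exact le_of_tendsto hdist
      (Eventually.of_forall fun k => (hLip k).dist_le_mul x y)
  have hcf : Continuous f := hLipf.continuous
  refine ⟨hLipf, fun q hq => ?_⟩
  set ζ := gradient f q with hζ
  -- the approximate gradient sets
  set A : ℕ → Set (EuclideanSpace ℝ (Fin n)) := fun m =>
    {p | ∃ k x, m ≤ k ∧ x ∈ V ∧ dist x q ≤ 1 / (m + 1) ∧ gradient (fk k) x = p} with hA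
  set Kq : Set (EuclideanSpace ℝ (Fin n)) := ⋂ m, closure (A m) with hKq
  have hAball : ∀ m, A m ⊆ Metric.closedBall 0 C := by
    rintro m p ⟨k, x, -, -, -, rfl⟩
    rw [Metric.mem_closedBall, dist_zero_right]
    exact aux_gradient_norm_le (hLip k)
  have hKball : Kq ⊆ Metric.closedBall 0 C := fun p hp => by
    have := (Set.mem_iInter.1 hp) 0
    exact (closure_minimal (hAball 0) Metric.isClosed_closedBall) this
  have hKcl : IsClosed Kq := isClosed_iInter fun m => isClosed_closure
  have hKcpt : IsCompact Kq :=
    (isCompact_closedBall (0 : EuclideanSpace ℝ (Fin n)) C).of_isClosed_subset hKcl hKball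
  -- nonempty: V has points near q
  have hVnear : ∀ r : ℝ, 0 < r → ∃ x ∈ V, dist x q ≤ r := by
    intro r hr
    by_contra hcon
    push_neg at hcon
    have hsub : Metric.ball q r ⊆ Vᶜ := by
      intro x hx
      intro hxV
      exact absurd (le_of_lt (Metric.mem_ball.1 hx)) (by simpa using (hcon x hxV).not_ge)
    have hmb := measure_mono (μ := (volume : Measure (EuclideanSpace ℝ (Fin n)))) hsub
    rw [hV] at hmb
    exact absurd (le_antisymm hmb zero_le) (Metric.measure_ball_pos volume q hr).ne'
  have hAne : ∀ m, (A m).Nonempty := by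
    intro m
    obtain ⟨x, hxV, hxq⟩ := hVnear (1 / (m + 1)) (by positivity)
    exact ⟨gradient (fk m) x, m, x, le_refl m, hxV, hxq, rfl⟩
  have hAmono : ∀ m, A (m + 1) ⊆ A m := by
    rintro m p ⟨k, x, hk1, hxV, hxq, rfl⟩
    refine ⟨k, x, by omega, hxV, le_trans hxq ?_, rfl⟩
    apply one_div_le_one_div_of_le (by positivity)
    push_cast; linarith
  have hKne : Kq.Nonempty := by
    apply IsCompact.nonempty_iInter_of_sequence_nonempty_isCompact_isClosed
      (fun m => closure (A m)) (fun m => closure_mono (hAmono m))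
      (fun m => (hAne m).closure)
      (((isCompact_closedBall _ _).of_isClosed_subset isClosed_closure
        (closure_minimal (hAball 0) Metric.isClosed_closedBall)))
      (fun m => isClosed_closure)
  -- extraction of sequences
  have hKseq : ∀ p ∈ Kq, ∃ (κ : ℕ → ℕ) (x : ℕ → EuclideanSpace ℝ (Fin n)),
      StrictMono κ ∧ (∀ j, x j ∈ V) ∧ Tendsto x atTop (𝓝 q) ∧
      Tendsto (fun j => gradient (fk (κ j)) (x j)) atTop (𝓝 p) := by
    intro p hp
    have hchoice : ∀ j : ℕ, ∃ k x, j ≤ k ∧ x ∈ V ∧ dist x q ≤ 1 / (j + 1) ∧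
        dist (gradient (fk k) x) p < 1 / (j + 1) := by
      intro j
      have hpj : p ∈ closure (A j) := Set.mem_iInter.1 hp j
      obtain ⟨b, hbA, hbd⟩ := Metric.mem_closure_iff.1 hpj (1 / (j + 1)) (by positivity)
      obtain ⟨k, x, hk, hxV, hxq, rfl⟩ := hbA
      exact ⟨k, x, hk, hxV, hxq, by rwa [dist_comm] at hbd⟩
    choose k x hkge hxV hxq hgp using hchoice
    set φ : ℕ → ℕ := fun i => Nat.rec 0 (fun _ prev => k prev + 1) i with hφ
    have hφs : ∀ i, φ (i + 1) = k (φ i) + 1 := fun i => rfl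
    have hφmono : StrictMono φ := strictMono_nat_of_lt_succ fun i => by
      rw [hφs]; have := hkge (φ i); omega
    have hφge : ∀ i, i ≤ φ i := fun i => hφmono.le_apply
    have hκmono : StrictMono (k ∘ φ) := strictMono_nat_of_lt_succ fun i => by
      simp only [Function.comp_apply]
      rw [hφs i]
      have h1 := hkge (φ (i + 1))
      rw [hφs i] at h1
      omega
    have hdistb : ∀ i : ℕ, (1 : ℝ) / (φ i + 1) ≤ 1 / (i + 1) := by
      intro i
      apply one_div_le_one_div_of_le (by positivity)
      have hc : (i : ℝ) ≤ (φ i : ℝ) := Nat.cast_le.2 (hφge i)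
      linarith
    refine ⟨k ∘ φ, x ∘ φ, hκmono, fun j => hxV (φ j), ?_, ?_⟩
    · rw [tendsto_iff_dist_tendsto_zero]
      apply squeeze_zero (fun i => dist_nonneg) (fun i => le_trans (hxq (φ i)) (hdistb i)) hone
    · rw [tendsto_iff_dist_tendsto_zero]
      exact squeeze_zero (fun i => dist_nonneg)
        (fun i => le_trans (hgp (φ i)).le (hdistb i)) hone
  -- Kq lies in the fiber of L over q
  have hKL : Kq ⊆ {p | (q, p) ∈ L} := by
    intro p hp
    obtain ⟨κ, x, hκ, hxV, hxq, hgp⟩ := hKseq p hp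
    exact (hclosure κ hκ (fun j => (x j, gradient (fk (κ j)) (x j)))
      (fun j => (hVk (κ j) _ (hxV j)).2.1) (q, p) (hxq.prodMk_nhds hgp)).1
  -- main claim: the gradient lies in the convex hull of Kq
  have hmain : ζ ∈ convexHull ℝ Kq := by
    by_contra hcon
    have hcpt' : IsCompact (convexHull ℝ Kq) := aux_isCompact_convexHull hKcpt
    obtain ⟨φ, u, hφu, hu⟩ :=
      geometric_hahn_banach_closed_point (convex_convexHull ℝ Kq) hcpt'.isClosed hcon
    set v : EuclideanSpace ℝ (Fin n) := (InnerProductSpace.toDual ℝ _).symm φ with hv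
    have hφv : ∀ p, φ p = inner ℝ v p := by
      intro p
      rw [hv, InnerProductSpace.toDual_symm_apply]
    -- uniform directional bound near q
    obtain ⟨m₀, hm₀⟩ : ∃ m : ℕ, ∀ k x', m ≤ k → x' ∈ V → dist x' q ≤ 1 / (m + 1) →
        (inner ℝ v (gradient (fk k) x') : ℝ) ≤ u := by
      by_contra hcl
      push_neg at hcl
      choose k x hkge hxV hxq hgu using hcl
      have hball : ∀ m, gradient (fk (k m)) (x m) ∈
          Metric.closedBall (0 : EuclideanSpace ℝ (Fin n)) C := fun m => by
        rw [Metric.mem_closedBall, dist_zero_right]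
        exact aux_gradient_norm_le (hLip (k m))
      obtain ⟨p, hpball, ψ, hψ, htd⟩ :=
        (isCompact_closedBall (0 : EuclideanSpace ℝ (Fin n)) C).tendsto_subseq hball
      have hpK : p ∈ Kq := by
        rw [hKq, Set.mem_iInter]
        intro m
        apply mem_closure_of_tendsto htd
        filter_upwards [eventually_ge_atTop m] with j hj
        have hjm : m ≤ ψ j := le_trans hj (hψ.le_apply)
        refine ⟨k (ψ j), x (ψ j), le_trans hjm (hkge (ψ j)), hxV (ψ j),
          le_trans (hxq (ψ j)) ?_, rfl⟩
        apply one_div_le_one_div_of_le (by positivity)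
        push_cast
        have : (m : ℝ) ≤ (ψ j : ℝ) := by exact_mod_cast hjm
        linarith
      have h2 : (inner ℝ v p : ℝ) < u := by
        rw [← hφv]
        exact hφu p (subset_convexHull ℝ _ hpK)
      have h1 : u ≤ (inner ℝ v p : ℝ) := by
        have hct : Tendsto (fun j => (inner ℝ v ((fun m => gradient (fk (k m)) (x m)) (ψ j)) : ℝ))
            atTop (𝓝 (inner ℝ v p)) := (continuous_const.inner continuous_id).continuousAt.tendsto.comp htd
        exact le_of_tendsto_of_tendsto' tendsto_const_nhds hct
          (fun j => (hgu (ψ j)).le)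
      linarith
    set δ : ℝ := 1 / (m₀ + 1) with hδ
    have hδ0 : 0 < δ := by positivity
    set t₁ : ℝ := δ / (2 * (‖v‖ + 1)) with ht₁
    have hvpos : 0 < ‖v‖ + 1 := by positivity
    have ht₁0 : 0 < t₁ := by positivity
    -- increment bound at good base points
    have hstep : ∀ x₀ : EuclideanSpace ℝ (Fin n), (∀ᵐ s : ℝ ∂volume, x₀ + s • v ∈ V) →
        dist x₀ q ≤ δ / 2 → ∀ t : ℝ, 0 < t → t ≤ t₁ →
        f (x₀ + t • v) - f x₀ ≤ u * t := by
      intro x₀ hx₀ hx₀q t ht0 ht1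
      have hkbd : ∀ k, m₀ ≤ k → fk k (x₀ + t • v) - fk k x₀ ≤ u * t := by
        intro k hkm
        set g : ℝ → ℝ := fun s => fk k (x₀ + s • v) with hg
        have hgl : LipschitzWith (C * ‖v‖₊) g := by
          rw [lipschitzWith_iff_dist_le_mul]
          intro s s'
          have h1 : dist (g s) (g s') ≤ C * dist (x₀ + s • v) (x₀ + s' • v) :=
            (hLip k).dist_le_mul _ _
          have h2 : dist (x₀ + s • v) (x₀ + s' • v) = dist s s' * ‖v‖ := by
            rw [dist_add_left, dist_eq_norm, ← sub_smul, norm_smul, Real.norm_eq_abs,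
              ← Real.dist_eq]
          rw [h2] at h1
          calc dist (g s) (g s') ≤ C * (dist s s' * ‖v‖) := h1
            _ = ↑(C * ‖v‖₊) * dist s s' := by push_cast [coe_nnnorm]; ring
        have hae : ∀ᵐ s ∂(volume.restrict (Set.Ioc 0 t)),
            DifferentiableAt ℝ g s ∧ deriv g s ≤ u := by
          filter_upwards [ae_restrict_of_ae hx₀, ae_restrict_mem measurableSet_Ioc]
            with s hsV hs
          have hpos : dist (x₀ + s • v) q ≤ δ := by
            have hb1 : dist (x₀ + s • v) x₀ = |s| * ‖v‖ := by
              rw [dist_eq_norm, add_sub_cancel_left, norm_smul, Real.norm_eq_abs]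
            have hb2 : |s| ≤ t := by
              rw [abs_of_pos hs.1]; exact hs.2
            calc dist (x₀ + s • v) q ≤ dist (x₀ + s • v) x₀ + dist x₀ q := dist_triangle _ _ _
              _ ≤ |s| * ‖v‖ + δ / 2 := by rw [hb1]; linarith
              _ ≤ t₁ * ‖v‖ + δ / 2 := by
                  have : |s| * ‖v‖ ≤ t₁ * ‖v‖ :=
                    mul_le_mul_of_nonneg_right (le_trans hb2 ht1) (norm_nonneg v)
                  linarith
              _ ≤ δ := by
                  rw [ht₁]
                  rw [div_mul_eq_mul_div, div_add' _ _ _ (by positivity)]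
                  rw [div_le_iff₀ (by positivity)]
                  nlinarith [norm_nonneg v, hδ0]
          have hd := (hVk k _ hsV).1
          have hda := aux_hasDerivAt_line (x₀ := x₀) (v := v) (s := s) hd
          refine ⟨hda.differentiableAt, ?_⟩
          rw [hda.deriv, real_inner_comm]
          exact hm₀ k _ hkm hsV hpos
        have hfin := aux_lip_deriv_bound hgl ht0.le hae
        have hg0 : g 0 = fk k x₀ := by simp [hg]
        rw [hg0] at hfin
        calc fk k (x₀ + t • v) - fk k x₀ = g t - fk k x₀ := rfl
          _ ≤ u * t := hfin
      have hlim : Tendsto (fun k => fk k (x₀ + t • v) - fk k x₀) atTop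
          (𝓝 (f (x₀ + t • v) - f x₀)) :=
        (hconv.tendsto_at _).sub (hconv.tendsto_at _)
      exact le_of_tendsto hlim (eventually_atTop.2 ⟨m₀, hkbd⟩)
    -- extend the increment bound to q by continuity
    have hfub := aux_fubini V hV v
    have hqbd : ∀ t : ℝ, 0 < t → t ≤ t₁ → f (q + t • v) - f q ≤ u * t := by
      intro t ht0 ht1
      have hx : ∀ i : ℕ, ∃ x₀ : EuclideanSpace ℝ (Fin n),
          dist x₀ q ≤ min (δ / 2) (1 / (i + 1)) ∧ (∀ᵐ s : ℝ ∂volume, x₀ + s • v ∈ V) := by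
        intro i
        by_contra hcon2
        push_neg at hcon2
        have hsub : Metric.ball q (min (δ / 2) (1 / (i + 1))) ⊆
            {x | ¬ ∀ᵐ s : ℝ ∂volume, x + s • v ∈ V} := by
          intro x hxball hxae
          exact (hcon2 x (le_of_lt (Metric.mem_ball.1 hxball))) (hxae.mono fun s hs hn => hn hs)
        have hball0 := measure_mono (μ := (volume : Measure (EuclideanSpace ℝ (Fin n)))) hsub
        have h0 : volume {x : EuclideanSpace ℝ (Fin n) |
            ¬ ∀ᵐ s : ℝ ∂volume, x + s • v ∈ V} = 0 := ae_iff.1 hfub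
        rw [h0] at hball0
        exact absurd (le_antisymm hball0 zero_le)
          (Metric.measure_ball_pos volume q (by positivity : (0:ℝ) < min (δ / 2) (1 / (i + 1)))).ne'
      choose xs hxs1 hxs2 using hx
      have hxs3 : Tendsto xs atTop (𝓝 q) := by
        rw [tendsto_iff_dist_tendsto_zero]
        exact squeeze_zero (fun i => dist_nonneg)
          (fun i => le_trans (hxs1 i) (min_le_right _ _)) hone
      have hbd : ∀ i, f (xs i + t • v) - f (xs i) ≤ u * t := fun i =>
        hstep (xs i) (hxs2 i) (le_trans (hxs1 i) (min_le_left _ _)) t ht0 ht1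
      have htend : Tendsto (fun i => f (xs i + t • v) - f (xs i)) atTop
          (𝓝 (f (q + t • v) - f q)) := by
        apply Tendsto.sub
        · exact (hcf.tendsto _).comp (hxs3.add tendsto_const_nhds)
        · exact (hcf.tendsto _).comp hxs3
      exact le_of_tendsto htend (Eventually.of_forall hbd)
    -- differentiate to contradict the separation
    have hder : HasDerivAt (fun t : ℝ => f (q + t • v)) (inner ℝ (gradient f (q + (0:ℝ) • v)) v : ℝ) 0 :=
      aux_hasDerivAt_line (by simpa using hq)
    have hder' : HasDerivAt (fun t : ℝ => f (q + t • v)) (inner ℝ ζ v : ℝ) 0 := by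
      simpa only [zero_smul, add_zero] using hder
    have hslope := hasDerivAt_iff_tendsto_slope.1 hder'
    have hsl : Tendsto (slope (fun t : ℝ => f (q + t • v)) 0) (𝓝[>] 0) (𝓝 (inner ℝ ζ v : ℝ)) :=
      hslope.mono_left (nhdsWithin_mono 0 fun y hy => ne_of_gt hy)
    have hle : (inner ℝ ζ v : ℝ) ≤ u := by
      apply le_of_tendsto hsl
      filter_upwards [Ioc_mem_nhdsGT_of_mem ⟨le_refl (0:ℝ), ht₁0⟩] with t ht
      rw [slope_def_field]
      have := hqbd t ht.1 ht.2
      rw [div_le_iff₀ (by linarith [ht.1] : (0:ℝ) < t - 0)]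
      simpa [sub_zero] using (by simpa [zero_smul] using this : f (q + t • v) - f (q + (0:ℝ) • v) ≤ u * t)
    have hfinal : u < (inner ℝ ζ v : ℝ) := by
      have := hu
      rw [hφv ζ, real_inner_comm] at this
      exact this
    linarith
  constructor
  · exact convexHull_mono hKL hmain
  · intro hext
    have hext' : ζ ∈ Set.extremePoints ℝ (convexHull ℝ Kq) := by
      rw [mem_extremePoints] at hext ⊢
      exact ⟨hmain, fun x1 hx1 x2 hx2 hseg =>
        hext.2 x1 (convexHull_mono hKL hx1) x2 (convexHull_mono hKL hx2) hseg⟩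
    have hζK : ζ ∈ Kq := extremePoints_convexHull_subset hext'
    obtain ⟨κ, x, hκ, hxV, hxq, hgp⟩ := hKseq ζ hζK
    have hcl := hclosure κ hκ (fun j => (x j, gradient (fk (κ j)) (x j)))
      (fun j => (hVk (κ j) _ (hxV j)).2.1) (q, ζ) (hxq.prodMk_nhds hgp)
    have heq : (fun j => hk (κ j) (x j, gradient (fk (κ j)) (x j)))
        = fun j => fk (κ j) (x j) :=
      funext fun j => ((hVk (κ j) _ (hxV j)).2.2).symm
    have htend2 : Tendsto (fun j => fk (κ j) (x j)) atTop (𝓝 (f q)) := by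
      rw [Metric.tendsto_nhds]
      intro ε hε
      have hu1 : ∀ᶠ k in atTop, ∀ y, dist (f y) (fk k y) < ε / 2 :=
        (Metric.tendstoUniformly_iff.1 hconv) (ε / 2) (by linarith)
      have hu2 : ∀ᶠ j in atTop, ∀ y, dist (f y) (fk (κ j) y) < ε / 2 :=
        hκ.tendsto_atTop.eventually hu1
      have hu3 : ∀ᶠ j in atTop, dist (f (x j)) (f q) < ε / 2 :=
        (Metric.tendsto_nhds.1 ((hcf.tendsto q).comp hxq)) (ε / 2) (by linarith)
      filter_upwards [hu2, hu3] with j h2 h3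
      calc dist (fk (κ j) (x j)) (f q)
          ≤ dist (fk (κ j) (x j)) (f (x j)) + dist (f (x j)) (f q) := dist_triangle _ _ _
        _ < ε / 2 + ε / 2 := by
            have := h2 (x j)
            rw [dist_comm] at this
            exact add_lt_add this h3
        _ = ε := by ring
    have := hcl.2
    rw [heq] at this
    exact (tendsto_nhds_unique htend2 this)
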